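/- Let M be a finite labeled transition system with states Q, labels S, initial states Q₀ and transition relation Δ, let Acc ⊆ Q be a set of accepting states, and let D and A be the predecessor and accepting matrices. Then for every n ≥ 0 and every state q' ∈ Q, α_{n+1}(q') = Σ_{q∈Q} D_{q'q}·α_n(q) + Σ_{q∈Q} A_{q'q}·β_n(q); equivalently, the vector (α_{n+1}(q))_q equals D applied to (α_n(q))_q plus A applied to (β_n(q))_q over ℕ. -/

import Mathlib

open scoped Classical

/-- A finite labeled transition system: a set of initial states and a transition relation. -/
structure LTS (Q S : Type*) where
  init : Set Q
  trans : Set (Q × S × Q)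

variable {Q S : Type*} [Fintype Q] [Fintype S]

/-- The finite set of paths of length `n` of an LTS: pairs of a state sequence of length
`n+1` starting in an initial state and a word of length `n` driving the transitions. -/
noncomputable def pathFinset (M : LTS Q S) (n : ℕ) :
    Finset ((Fin (n + 1) → Q) × (Fin n → S)) :=
  Finset.univ.filter (fun p =>
    p.1 0 ∈ M.init ∧ ∀ i : Fin n, (p.1 i.castSucc, p.2 i, p.1 i.succ) ∈ M.trans)

/-- `beta M n q` is the number of paths of length `n` of `M` ending in state `q`. -/
noncomputable def beta (M : LTS Q S) (n : ℕ) (q : Q) : ℕ :=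
  ((pathFinset M n).filter (fun p => p.1 (Fin.last n) = q)).card

/-- `alpha M Acc n q` is the total number of visits to accepting states (from `Acc`)
summed over all paths of length `n` of `M` ending in state `q`. -/
noncomputable def alpha (M : LTS Q S) (Acc : Set Q) (n : ℕ) (q : Q) : ℕ :=
  ∑ p ∈ (pathFinset M n).filter (fun p => p.1 (Fin.last n) = q),
    (Finset.univ.filter (fun i : Fin (n + 1) => p.1 i ∈ Acc)).card

/-- The predecessor matrix: `predMatrix M i j` is the number of labels `a` with a
transition `(j, a, i)`. -/
noncomputable def predMatrix (M : LTS Q S) : Matrix Q Q ℕ :=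
  fun i j => (Finset.univ.filter (fun a : S => (j, a, i) ∈ M.trans)).card

/-- The accepting matrix: agrees with the predecessor matrix on rows indexed by accepting
states and is zero elsewhere. -/
noncomputable def accMatrix (M : LTS Q S) (Acc : Set Q) : Matrix Q Q ℕ :=
  fun i j => if i ∈ Acc then predMatrix M i j else 0

/-- For every `n` and state `q'`,
`α_{n+1}(q') = Σ_q D_{q'q} · α_n(q) + Σ_q A_{q'q} · β_n(q)`. -/
theorem stmt_4 (M : LTS Q S) (Acc : Set Q) (n : ℕ) (q' : Q) :
    alpha M Acc (n + 1) q' =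
      (∑ q : Q, predMatrix M q' q * alpha M Acc n q) +
        ∑ q : Q, accMatrix M Acc q' q * beta M n q := by
  classical
  set cnt : (Fin (n + 1) → Q) × (Fin n → S) → ℕ :=
    fun p => (Finset.univ.filter (fun i : Fin (n + 1) => p.1 i ∈ Acc)).card with hcnt
  set c : (Fin (n + 1) → Q) × (Fin n → S) → ℕ :=
    fun p => (Finset.univ.filter (fun a : S => (p.1 (Fin.last n), a, q') ∈ M.trans)).card
    with hc
  set ind : ℕ := if q' ∈ Acc then 1 else 0 with hind
  set t : Finset (((Fin (n + 1) → Q) × (Fin n → S)) × S) :=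
    Finset.univ.filter (fun x => x.1 ∈ pathFinset M n ∧
      (x.1.1 (Fin.last n), x.2, q') ∈ M.trans) with ht
  have hstep1 : alpha M Acc (n + 1) q' = ∑ x ∈ t, (cnt x.1 + ind) := by
    rw [alpha]
    refine Finset.sum_nbij'
      (i := fun p => ((Fin.init p.1, Fin.init p.2), p.2 (Fin.last n)))
      (j := fun x => (Fin.snoc x.1.1 q', Fin.snoc x.1.2 x.2)) ?_ ?_ ?_ ?_ ?_
    · rintro ⟨f, w⟩ hp
      simp only [ht, pathFinset, Finset.mem_filter, Finset.mem_univ, true_and] at hp ⊢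
      obtain ⟨⟨h0, htr⟩, hlast⟩ := hp
      refine ⟨⟨?_, ?_⟩, ?_⟩
      · simpa [Fin.init] using h0
      · intro i
        have := htr i.castSucc
        simpa [Fin.init] using this
      · have := htr (Fin.last n)
        simpa [Fin.init, Fin.succ_last, hlast] using this
    · rintro ⟨⟨f, w⟩, a⟩ hx
      simp only [ht, pathFinset, Finset.mem_filter, Finset.mem_univ, true_and] at hx ⊢
      obtain ⟨⟨h0, htr⟩, hte⟩ := hx
      refine ⟨⟨?_, ?_⟩, ?_⟩
      · have : (0 : Fin (n + 2)) = Fin.castSucc 0 := rfl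
        rw [this, Fin.snoc_castSucc]
        exact h0
      · intro i
        refine Fin.lastCases ?_ ?_ i
        · have h1 : (Fin.last n).castSucc = Fin.castSucc (Fin.last n) := rfl
          simpa [Fin.succ_last, Fin.snoc_last, Fin.snoc_castSucc] using hte
        · intro j
          have h1 : (j.castSucc).succ = Fin.castSucc j.succ := (Fin.succ_castSucc j).symm ▸ rfl
          have h2 : (j.castSucc).castSucc = Fin.castSucc j.castSucc := rfl
          rw [Fin.succ_castSucc]
          simpa [Fin.snoc_castSucc, -Fin.castSucc_succ] using htr j
      · simp [Fin.snoc_last]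
    · rintro ⟨f, w⟩ hp
      simp only [pathFinset, Finset.mem_filter, Finset.mem_univ, true_and] at hp
      obtain ⟨-, hlast⟩ := hp
      refine Prod.ext ?_ ?_
      · simpa [hlast] using Fin.snoc_init_self f
      · exact Fin.snoc_init_self w
    · rintro ⟨⟨f, w⟩, a⟩ -
      refine Prod.ext (Prod.ext ?_ ?_) ?_ <;>
        simp [Fin.init_snoc, Fin.snoc_last]
    · rintro ⟨f, w⟩ hp
      simp only [pathFinset, Finset.mem_filter, Finset.mem_univ, true_and] at hp
      obtain ⟨-, hlast⟩ := hp
      simp only [hcnt, hind, Finset.card_filter]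
      rw [Fin.sum_univ_castSucc]
      simp [Fin.init, hlast, Finset.card_filter, -Finset.sum_boole]
      exact Finset.sum_congr rfl fun i _ => by congr
  have hsum_t : ∑ x ∈ t, (cnt x.1 + ind)
      = ∑ p ∈ pathFinset M n, c p * (cnt p + ind) := by
    rw [ht, Finset.sum_filter, Fintype.sum_prod_type]
    rw [show (∑ p ∈ pathFinset M n, c p * (cnt p + ind))
        = ∑ p, if p ∈ pathFinset M n then c p * (cnt p + ind) else 0 by
      rw [Finset.sum_ite_mem, Finset.univ_inter]]
    refine Finset.sum_congr rfl ?_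
    intro p _
    by_cases hp : p ∈ pathFinset M n
    · simp [hp, Finset.sum_ite, Finset.sum_const, hc, mul_comm]
    · simp [hp]
  have hD : ∀ p : (Fin (n + 1) → Q) × (Fin n → S),
      predMatrix M q' (p.1 (Fin.last n)) = c p := fun p => rfl
  have hfiber1 : ∑ q : Q, predMatrix M q' q * alpha M Acc n q
      = ∑ p ∈ pathFinset M n, c p * cnt p := by
    simp only [alpha, Finset.mul_sum]
    rw [← Finset.sum_fiberwise (pathFinset M n) (fun p => p.1 (Fin.last n))
      (fun p => c p * cnt p)]
    refine Finset.sum_congr rfl fun q _ => Finset.sum_congr rfl fun p hp => ?_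
    have : p.1 (Fin.last n) = q := (Finset.mem_filter.mp hp).2
    rw [← this, hD]
  have hfiber2 : ∑ q : Q, accMatrix M Acc q' q * beta M n q
      = ∑ p ∈ pathFinset M n, c p * ind := by
    simp only [beta, accMatrix, Finset.card_eq_sum_ones, Finset.mul_sum, mul_one]
    rw [← Finset.sum_fiberwise (pathFinset M n) (fun p => p.1 (Fin.last n))
      (fun p => c p * ind)]
    refine Finset.sum_congr rfl fun q _ => Finset.sum_congr rfl fun p hp => ?_
    have hq : p.1 (Fin.last n) = q := (Finset.mem_filter.mp hp).2
    by_cases hA : q' ∈ Acc <;> simp [hind, hA, ← hq, hD]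
  rw [hstep1, hsum_t, hfiber1, hfiber2, ← Finset.sum_add_distrib]
  refine Finset.sum_congr rfl fun p _ => by ring
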